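/- With φ, k, P, N as in the Gold-style reduction (P = {ε, a^k} ∪ {a^i bb : C_i positive}, N = {a^i : 0<i<k} ∪ {a^i bb : C_i negative} ∪ {a^i b a^{k-r} : 0≤i≤m-1, 0≤r<k, (r<m or x_{r-m} ∉ C_i)}), if there exists a DFA over {a,b} with at most k = n+m states accepting all words of P and rejecting all words of N, then φ is satisfiable. -/
import Mathlib

/-- Letter `a` is `false`, letter `b` is `true`. If some DFA over `{a,b}` with at most
`k = n + m` states accepts every word of `P` and rejects every word of `N` (for the
Gold-style reduction sets built from a pure CNF formula), then the formula is satisfiable. -/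
theorem consistent_dfa_implies_satisfiable (n m : ℕ) (hn : 1 ≤ n) (hm : 1 ≤ m)
    (C : Fin m → Finset (Fin n)) (pos : Fin m → Bool)
    (h : ∃ (σ : Type) (_ : Fintype σ) (A : DFA Bool σ),
      Fintype.card σ ≤ n + m ∧
      [] ∈ A.accepts ∧
      List.replicate (n + m) false ∈ A.accepts ∧
      (∀ i : Fin m, pos i = true →
        List.replicate (i : ℕ) false ++ [true, true] ∈ A.accepts) ∧
      (∀ i, 0 < i → i < n + m → List.replicate i false ∉ A.accepts) ∧
      (∀ i : Fin m, pos i = false →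
        List.replicate (i : ℕ) false ++ [true, true] ∉ A.accepts) ∧
      (∀ i : Fin m, ∀ r : ℕ, r < n + m →
        (r < m ∨ ∀ j : Fin n, m + (j : ℕ) = r → j ∉ C i) →
        List.replicate (i : ℕ) false ++ [true] ++ List.replicate (n + m - r) false
          ∉ A.accepts)) :
    ∃ β : Fin n → Bool, ∀ i, ∃ j ∈ C i, β j = pos i := by
  classical
  obtain ⟨σ, inst, A, hcard, hε, hak, hposP, hN1, hnegN, hN3⟩ := h
  set k := n + m with hk
  set s : ℕ → σ := fun t => A.evalFrom A.start (List.replicate t false) with hs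
  have hshift : ∀ t u : ℕ, A.evalFrom (s t) (List.replicate u false) = s (t + u) := by
    intro t u
    simp only [hs, ← DFA.evalFrom_of_append, ← List.replicate_add]
  have haccept : ∀ x : List Bool, x ∈ A.accepts ↔ A.evalFrom A.start x ∈ A.accept :=
    fun x => Iff.rfl
  have hskacc : s k ∈ A.accept := hak
  have hsrej : ∀ t, 0 < t → t < k → s t ∉ A.accept := fun t h1 h2 => hN1 t h1 h2
  -- injectivity
  have hinj : Function.Injective (fun t : Fin k => s t) := by
    intro a b hab
    simp only at hab
    by_contra hne
    have hne' : (a:ℕ) ≠ (b:ℕ) := fun e => hne (Fin.ext e)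
    rcases lt_or_gt_of_ne hne' with hlt | hlt
    case _ =>
      have h1 : s ((a:ℕ) + (k - b)) = s k := by
        rw [← hshift, hab, hshift]
        congr 1
        omega
      exact hsrej _ (by omega) (by omega) (h1 ▸ hskacc)
    case _ =>
      have h1 : s ((b:ℕ) + (k - a)) = s k := by
        rw [← hshift, ← hab, hshift]
        congr 1
        omega
      exact hsrej _ (by omega) (by omega) (h1 ▸ hskacc)
  have hkpos : 0 < k := by omega
  have hcard' : Fintype.card σ = k := le_antisymm hcard
    (by simpa using Fintype.card_le_of_injective _ hinj)
  have hsurj : Function.Surjective (fun t : Fin k => s t) :=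
    ((Fintype.bijective_iff_injective_and_card _).2 ⟨hinj, by simp [hcard']⟩).2
  -- main construction
  refine ⟨fun j => if A.step (s (m + (j:ℕ))) true ∈ A.accept then true else false, ?_⟩
  intro i
  set q := A.step (s (i:ℕ)) true with hq
  obtain ⟨r, hr⟩ := hsurj q
  -- the word a^i b a^(k-r) is accepted
  have hwacc : List.replicate (i:ℕ) false ++ [true] ++ List.replicate (k - (r:ℕ)) false
      ∈ A.accepts := by
    rw [haccept, DFA.evalFrom_of_append, DFA.evalFrom_of_append]
    have e1 : A.evalFrom (A.evalFrom A.start (List.replicate (i:ℕ) false)) [true] = q := rfl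
    rw [e1, ← hr]
    have := hshift (r:ℕ) (k - (r:ℕ))
    rw [this]
    have : (r:ℕ) + (k - (r:ℕ)) = k := by omega
    rw [this]
    exact hskacc
  have hcond := hN3 i (r:ℕ) r.2
  have hnot : ¬((r:ℕ) < m ∨ ∀ j : Fin n, m + (j : ℕ) = (r:ℕ) → j ∉ C i) := by
    intro hc
    exact hcond hc hwacc
  push_neg at hnot
  obtain ⟨_, j, hj1, hj2⟩ := hnot
  refine ⟨j, hj2, ?_⟩
  have hsq : s (m + (j:ℕ)) = q := by rw [hj1]; exact hr
  have hbb : A.evalFrom A.start (List.replicate (i:ℕ) false ++ [true, true])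
      = A.step q true := by
    rw [DFA.evalFrom_of_append]; rfl
  cases hp : pos i with
  | true =>
    have := hposP i hp
    rw [haccept, hbb] at this
    simp [hsq, this]
  | false =>
    have := hnegN i hp
    rw [haccept, hbb] at this
    simp [hsq, this]
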